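/- Let 1 ≤ k ≤ n − k, let σ ∈ ℝ^k, W ∈ ℂ^{k×k} unitary, and V₁ ∈ ℂ^{(n−k)×k} with V₁†V₁ = 1_k, and set B = V₁·diag(σ)·W† ∈ ℂ^{(n−k)×k}. Then for the skew-Hermitian block matrix X = [[0, −B†],[B, 0]] ∈ ℂ^{n×n} one has exp(X)·[1_k; 0] = [ W·diag(cos σ₁,…,cos σ_k)·W† ; V₁·diag(sin σ₁,…,sin σ_k)·W† ]. In particular the singular values of the upper k×k block of exp(X)·[1_k;0] are cos σ₁, …, cos σ_k, so the principal angles between the subspaces ⟨[1_k;0]⟩ and ⟨exp(X)[1_k;0]⟩ equal the singular values of B. -/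

import Mathlib

open Matrix Complex
open scoped Nat

noncomputable def cfun (n : ℕ) (x : ℝ) : ℂ :=
  ((Complex.I * x) ^ n + (-(Complex.I * x)) ^ n) / 2

noncomputable def sfun (n : ℕ) (x : ℝ) : ℂ :=
  ((Complex.I * x) ^ n - (-(Complex.I * x)) ^ n) / (2 * Complex.I)


lemma cfun_zero (x : ℝ) : cfun 0 x = 1 := by simp [cfun]

lemma sfun_zero (x : ℝ) : sfun 0 x = 0 := by simp [sfun]

lemma cfun_succ (n : ℕ) (x : ℝ) : cfun (n + 1) x = -(x : ℂ) * sfun n x := by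
  have hI : Complex.I ≠ 0 := Complex.I_ne_zero
  have h2 : Complex.I * Complex.I = -1 := Complex.I_mul_I
  simp only [cfun, sfun, pow_succ]
  field_simp
  ring_nf
  rw [Complex.I_sq]
  ring

lemma sfun_succ (n : ℕ) (x : ℝ) : sfun (n + 1) x = (x : ℂ) * cfun n x := by
  have hI : Complex.I ≠ 0 := Complex.I_ne_zero
  simp only [cfun, sfun, pow_succ]
  field_simp
  ring

lemma hasSum_cfun (x : ℝ) : HasSum (fun n : ℕ => ((n ! : ℂ))⁻¹ * cfun n x) ((Real.cos x : ℂ)) := by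
  have h1 := NormedSpace.expSeries_div_hasSum_exp (Complex.I * x)
  have h2 := NormedSpace.expSeries_div_hasSum_exp (-(Complex.I * x))
  rw [← Complex.exp_eq_exp_ℂ] at h1 h2
  have h := (h1.add h2).div_const 2
  have hval : (Complex.exp (Complex.I * x) + Complex.exp (-(Complex.I * x))) / 2
      = (Real.cos x : ℂ) := by
    rw [show Complex.I * (x : ℂ) = (x : ℂ) * Complex.I by ring,
      show -((x : ℂ) * Complex.I) = (-(x : ℂ)) * Complex.I by ring,
      Complex.exp_mul_I, Complex.exp_mul_I, Complex.cos_neg, Complex.sin_neg,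
      Complex.ofReal_cos]
    ring
  rw [hval] at h
  convert h using 2 with n
  · rfl
  simp only [cfun]
  ring

lemma hasSum_sfun (x : ℝ) : HasSum (fun n : ℕ => ((n ! : ℂ))⁻¹ * sfun n x) ((Real.sin x : ℂ)) := by
  have h1 := NormedSpace.expSeries_div_hasSum_exp (Complex.I * x)
  have h2 := NormedSpace.expSeries_div_hasSum_exp (-(Complex.I * x))
  rw [← Complex.exp_eq_exp_ℂ] at h1 h2
  have h := (h1.sub h2).div_const (2 * Complex.I)
  have hval : (Complex.exp (Complex.I * x) - Complex.exp (-(Complex.I * x))) / (2 * Complex.I)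
      = (Real.sin x : ℂ) := by
    rw [show Complex.I * (x : ℂ) = (x : ℂ) * Complex.I by ring,
      show -((x : ℂ) * Complex.I) = (-(x : ℂ)) * Complex.I by ring,
      Complex.exp_mul_I, Complex.exp_mul_I, Complex.cos_neg, Complex.sin_neg,
      Complex.ofReal_sin]
    have hI : Complex.I ≠ 0 := Complex.I_ne_zero
    field_simp
    ring
  rw [hval] at h
  convert h using 2 with n
  · rfl
  simp only [sfun]
  ring

section PowLemma

variable {k m : ℕ}

lemma pow_mul_baseProj
    (σ : Fin k → ℝ) (W : Matrix (Fin k) (Fin k) ℂ)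
    (hWW : W * Wᴴ = 1) (hWW' : Wᴴ * W = 1)
    (V₁ : Matrix (Fin m) (Fin k) ℂ) (hV₁ : V₁ᴴ * V₁ = 1)
    (B : Matrix (Fin m) (Fin k) ℂ)
    (hB : B = V₁ * Matrix.diagonal (fun i => (σ i : ℂ)) * Wᴴ)
    (hcs : ∀ n x, cfun (n + 1) x = -(x : ℂ) * sfun n x)
    (hsc : ∀ n x, sfun (n + 1) x = (x : ℂ) * cfun n x)
    (hc0 : ∀ x, cfun 0 x = 1) (hs0 : ∀ x, sfun 0 x = 0)
    (n : ℕ) :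
    (Matrix.fromBlocks 0 (-Bᴴ) B 0) ^ n *
      Matrix.fromBlocks (1 : Matrix (Fin k) (Fin k) ℂ) 0 0 (0 : Matrix (Fin m) (Fin m) ℂ) =
    Matrix.fromBlocks (W * Matrix.diagonal (fun l => cfun n (σ l)) * Wᴴ) 0
      (V₁ * Matrix.diagonal (fun l => sfun n (σ l)) * Wᴴ) 0 := by
  have hdstar : (Matrix.diagonal fun i => (σ i : ℂ))ᴴ = Matrix.diagonal fun i => (σ i : ℂ) := by
    rw [diagonal_conjTranspose]
    refine congrArg Matrix.diagonal (funext fun i => ?_)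
    simp [Complex.conj_ofReal]
  have hBH : Bᴴ = W * Matrix.diagonal (fun i => (σ i : ℂ)) * V₁ᴴ := by
    rw [hB, conjTranspose_mul, conjTranspose_mul, conjTranspose_conjTranspose, hdstar,
      Matrix.mul_assoc]
  have key1 : ∀ d : Fin k → ℂ, Bᴴ * (V₁ * Matrix.diagonal d * Wᴴ)
      = W * Matrix.diagonal (fun l => (σ l : ℂ) * d l) * Wᴴ := by
    intro d
    rw [hBH]
    simp only [Matrix.mul_assoc]
    rw [← Matrix.mul_assoc V₁ᴴ V₁, hV₁, one_mul, ← Matrix.mul_assoc (Matrix.diagonal _),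
      Matrix.diagonal_mul_diagonal]
  have key2 : ∀ d : Fin k → ℂ, B * (W * Matrix.diagonal d * Wᴴ)
      = V₁ * Matrix.diagonal (fun l => (σ l : ℂ) * d l) * Wᴴ := by
    intro d
    rw [hB]
    simp only [Matrix.mul_assoc]
    rw [← Matrix.mul_assoc Wᴴ W, hWW', one_mul, ← Matrix.mul_assoc (Matrix.diagonal _),
      Matrix.diagonal_mul_diagonal]
  induction n with
  | zero =>
      have e1 : W * Matrix.diagonal (fun l => cfun 0 (σ l)) * Wᴴ = 1 := by
        have h1 : Matrix.diagonal (fun l => cfun 0 (σ l)) = (1 : Matrix (Fin k) (Fin k) ℂ) := by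
          rw [← Matrix.diagonal_one]
          exact congrArg Matrix.diagonal (funext fun l => hc0 _)
        rw [h1, Matrix.mul_one, hWW]
      have e2 : V₁ * Matrix.diagonal (fun l => sfun 0 (σ l)) * Wᴴ = 0 := by
        have h2 : Matrix.diagonal (fun l => sfun 0 (σ l)) = (0 : Matrix (Fin k) (Fin k) ℂ) := by
          rw [← Matrix.diagonal_zero]
          exact congrArg Matrix.diagonal (funext fun l => hs0 _)
        rw [h2, Matrix.mul_zero, Matrix.zero_mul]
      rw [pow_zero, one_mul, e1, e2]
  | succ n ih =>
      rw [pow_succ', Matrix.mul_assoc, ih, Matrix.fromBlocks_multiply]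
      simp only [Matrix.zero_mul, Matrix.mul_zero, add_zero, zero_add]
      rw [Matrix.neg_mul, key1, key2]
      have hdc : Matrix.diagonal (fun l => cfun (n + 1) (σ l))
          = -(Matrix.diagonal fun l => (σ l : ℂ) * sfun n (σ l)) := by
        rw [Matrix.diagonal_neg]
        exact congrArg Matrix.diagonal (funext fun l => by rw [hcs]; ring)
      have hds : Matrix.diagonal (fun l => sfun (n + 1) (σ l))
          = Matrix.diagonal (fun l => (σ l : ℂ) * cfun n (σ l)) :=
        congrArg Matrix.diagonal (funext fun l => hsc n (σ l))
      rw [hdc, hds, Matrix.mul_neg, Matrix.neg_mul]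

end PowLemma

section ExpEntry

variable {N : Type*} [Fintype N] [DecidableEq N]

lemma entry_hasSum (X : Matrix N N ℂ) (r c : N) :
    HasSum (fun n : ℕ => ((n ! : ℂ))⁻¹ * (X ^ n) r c) ((NormedSpace.exp X) r c) := by
  have h : HasSum (fun n : ℕ => ((n ! : ℂ))⁻¹ • X ^ n) (NormedSpace.exp X) := by
    letI : SeminormedRing (Matrix N N ℂ) := Matrix.linftyOpSemiNormedRing
    letI : NormedRing (Matrix N N ℂ) := Matrix.linftyOpNormedRing
    letI : NormedAlgebra ℂ (Matrix N N ℂ) := Matrix.linftyOpNormedAlgebra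
    exact NormedSpace.exp_series_hasSum_exp' X
  have hcont : Continuous fun M : Matrix N N ℂ => M r c := by
    have h1 : Continuous fun M : Matrix N N ℂ => M r := continuous_apply r
    exact (continuous_apply c).comp h1
  have hg := h.map (AddMonoidHom.mk' (fun M : Matrix N N ℂ => M r c) (fun A B => rfl)) hcont
  exact hg

end ExpEntry

/-- The base point `Ψ₀ = [1_k; 0]` of the Stiefel manifold, with rows indexed by
`Fin k ⊕ Fin m` (so the ambient dimension is `n = k + m`). -/
def basePoint (k m : ℕ) : Matrix (Fin k ⊕ Fin m) (Fin k) ℂ :=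
  Matrix.of fun i j => Sum.elim (fun i' => if i' = j then (1 : ℂ) else 0) (fun _ => 0) i

lemma mul_basePoint_apply {k m : ℕ} (A : Matrix (Fin k ⊕ Fin m) (Fin k ⊕ Fin m) ℂ)
    (r : Fin k ⊕ Fin m) (j : Fin k) :
    (A * basePoint k m) r j = A r (Sum.inl j) := by
  rw [Matrix.mul_apply, Fintype.sum_sum_type]
  simp [basePoint]

lemma mul_blockProj_apply {k m : ℕ} (A : Matrix (Fin k ⊕ Fin m) (Fin k ⊕ Fin m) ℂ)
    (r : Fin k ⊕ Fin m) (j : Fin k) :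
    (A * Matrix.fromBlocks (1 : Matrix (Fin k) (Fin k) ℂ) 0 0
        (0 : Matrix (Fin m) (Fin m) ℂ)) r (Sum.inl j) = A r (Sum.inl j) := by
  rw [Matrix.mul_apply, Fintype.sum_sum_type]
  simp [Matrix.one_apply]

/-- **Geodesics on the Grassmann manifold via the SVD.** If `B = V₁·diag(σ)·Wᴴ`
(`V₁ᴴV₁ = 1_k`, `W` unitary) and `X = [[0, −Bᴴ],[B, 0]]`, then
`exp(X)·[1_k; 0] = [W·diag(cos σ)·Wᴴ ; V₁·diag(sin σ)·Wᴴ]`; in particular the singular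
values of the upper `k×k` block are `cos σᵢ`, so the principal angles between
`⟨[1_k;0]⟩` and `⟨exp(X)[1_k;0]⟩` are the singular values of `B`. -/
theorem grassmann_geodesic_svd (k m : ℕ) (hk : 1 ≤ k) (hkm : k ≤ m)
    (σ : Fin k → ℝ) (W : Matrix (Fin k) (Fin k) ℂ)
    (hW : W ∈ Matrix.unitaryGroup (Fin k) ℂ)
    (V₁ : Matrix (Fin m) (Fin k) ℂ) (hV₁ : V₁ᴴ * V₁ = 1)
    (B : Matrix (Fin m) (Fin k) ℂ)
    (hB : B = V₁ * Matrix.diagonal (fun i => (σ i : ℂ)) * Wᴴ) :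
    (∀ (i : Fin k) (j : Fin k),
      (NormedSpace.exp (Matrix.fromBlocks 0 (-Bᴴ) B 0) * basePoint k m)
          (Sum.inl i) j =
        (W * Matrix.diagonal (fun i => (Real.cos (σ i) : ℂ)) * Wᴴ) i j) ∧
    (∀ (i : Fin m) (j : Fin k),
      (NormedSpace.exp (Matrix.fromBlocks 0 (-Bᴴ) B 0) * basePoint k m)
          (Sum.inr i) j =
        (V₁ * Matrix.diagonal (fun i => (Real.sin (σ i) : ℂ)) * Wᴴ) i j) := by
  have hWW : W * Wᴴ = 1 := by
    have := Matrix.mem_unitaryGroup_iff.mp hW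
    rwa [Matrix.star_eq_conjTranspose] at this
  have hWW' : Wᴴ * W = 1 := by
    have := Matrix.mem_unitaryGroup_iff'.mp hW
    rwa [Matrix.star_eq_conjTranspose] at this
  have hpow := pow_mul_baseProj σ W hWW hWW' V₁ hV₁ B hB cfun_succ sfun_succ cfun_zero sfun_zero
  have expandW : ∀ (d : Fin k → ℂ) (i j : Fin k),
      (W * Matrix.diagonal d * Wᴴ) i j = ∑ l, W i l * d l * star (W j l) := by
    intro d i j
    rw [Matrix.mul_apply]
    refine Finset.sum_congr rfl fun l _ => ?_
    rw [Matrix.mul_diagonal, Matrix.conjTranspose_apply]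
  have expandV : ∀ (d : Fin k → ℂ) (i : Fin m) (j : Fin k),
      (V₁ * Matrix.diagonal d * Wᴴ) i j = ∑ l, V₁ i l * d l * star (W j l) := by
    intro d i j
    rw [Matrix.mul_apply]
    refine Finset.sum_congr rfl fun l _ => ?_
    rw [Matrix.mul_diagonal, Matrix.conjTranspose_apply]
  constructor
  · intro i j
    rw [mul_basePoint_apply]
    have hs := entry_hasSum (Matrix.fromBlocks 0 (-Bᴴ) B 0) (Sum.inl i) (Sum.inl j)
    have hfun : ∀ n : ℕ, ((Matrix.fromBlocks 0 (-Bᴴ) B 0) ^ n) (Sum.inl i) (Sum.inl j)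
        = ∑ l, W i l * cfun n (σ l) * star (W j l) := by
      intro n
      rw [← mul_blockProj_apply ((Matrix.fromBlocks 0 (-Bᴴ) B 0) ^ n), hpow n,
        Matrix.fromBlocks_apply₁₁, expandW]
    simp only [hfun] at hs
    have ht : HasSum (fun n : ℕ => ((n ! : ℂ))⁻¹ * ∑ l, W i l * cfun n (σ l) * star (W j l))
        ((W * Matrix.diagonal (fun l => (Real.cos (σ l) : ℂ)) * Wᴴ) i j) := by
      rw [expandW]
      have hcomp : ∀ l : Fin k, l ∈ Finset.univ →
          HasSum (fun n : ℕ => W i l * (((n ! : ℂ))⁻¹ * cfun n (σ l)) * star (W j l))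
            (W i l * (Real.cos (σ l) : ℂ) * star (W j l)) := fun l _ =>
        ((hasSum_cfun (σ l)).mul_left (W i l)).mul_right (star (W j l))
      have h := hasSum_sum hcomp
      have hfe : (fun n : ℕ => ((n ! : ℂ))⁻¹ * ∑ l, W i l * cfun n (σ l) * star (W j l))
          = fun n : ℕ => ∑ l, W i l * (((n ! : ℂ))⁻¹ * cfun n (σ l)) * star (W j l) := by
        funext n
        rw [Finset.mul_sum]
        exact Finset.sum_congr rfl fun l _ => by ring
      rw [hfe]
      exact h
    exact hs.unique ht
  · intro i j
    rw [mul_basePoint_apply]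
    have hs := entry_hasSum (Matrix.fromBlocks 0 (-Bᴴ) B 0) (Sum.inr i) (Sum.inl j)
    have hfun : ∀ n : ℕ, ((Matrix.fromBlocks 0 (-Bᴴ) B 0) ^ n) (Sum.inr i) (Sum.inl j)
        = ∑ l, V₁ i l * sfun n (σ l) * star (W j l) := by
      intro n
      rw [← mul_blockProj_apply ((Matrix.fromBlocks 0 (-Bᴴ) B 0) ^ n), hpow n,
        Matrix.fromBlocks_apply₂₁, expandV]
    simp only [hfun] at hs
    have ht : HasSum (fun n : ℕ => ((n ! : ℂ))⁻¹ * ∑ l, V₁ i l * sfun n (σ l) * star (W j l))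
        ((V₁ * Matrix.diagonal (fun l => (Real.sin (σ l) : ℂ)) * Wᴴ) i j) := by
      rw [expandV]
      have hcomp : ∀ l : Fin k, l ∈ Finset.univ →
          HasSum (fun n : ℕ => V₁ i l * (((n ! : ℂ))⁻¹ * sfun n (σ l)) * star (W j l))
            (V₁ i l * (Real.sin (σ l) : ℂ) * star (W j l)) := fun l _ =>
        ((hasSum_sfun (σ l)).mul_left (V₁ i l)).mul_right (star (W j l))
      have h := hasSum_sum hcomp
      have hfe : (fun n : ℕ => ((n ! : ℂ))⁻¹ * ∑ l, V₁ i l * sfun n (σ l) * star (W j l))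
          = fun n : ℕ => ∑ l, V₁ i l * (((n ! : ℂ))⁻¹ * sfun n (σ l)) * star (W j l) := by
        funext n
        rw [Finset.mul_sum]
        exact Finset.sum_congr rfl fun l _ => by ring
      rw [hfe]
      exact h
    exact hs.unique ht
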